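/- Let B be a skew-symmetrizable n×n integer matrix, let t be a vertex reached from the initial vertex t_0 by a path, and let t' be obtained from t by one further mutation in direction ℓ. Assume the ℓ-th columns of C^{B;t_0}_t and of C^{−B;t_0}_t are each sign-coherent (nonzero with all entries of the same sign), with column signs ε_{•ℓ}(C^{B;t_0}_t) and ε_{•ℓ}(C^{−B;t_0}_t). Then F^{B;t_0}_{t'} = F^{B;t_0}_t (J_ℓ + [ε_{•ℓ}(C^{−B;t_0}_t) B_t]^{•ℓ}_+) + [ε_{•ℓ}(C^{−B;t_0}_t) C^{B;t_0}_t]^{•ℓ}_+ and also F^{B;t_0}_{t'} = F^{B;t_0}_t (J_ℓ + [−ε_{•ℓ}(C^{B;t_0}_t) B_t]^{•ℓ}_+) + [ε_{•ℓ}(C^{B;t_0}_t) C^{−B;t_0}_t]^{•ℓ}_+. -/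

import Mathlib

open Matrix

section Defs

variable {ι : Type} [Fintype ι] [DecidableEq ι]
variable {R : Type} [CommRing R] [LinearOrder R] [IsStrictOrderedRing R]

/-- Entrywise positive part `[A]₊`. -/
def matPos (A : Matrix ι ι R) : Matrix ι ι R := fun i j => max (A i j) 0

/-- `A^{k•}`: the matrix keeping only the `k`-th row of `A`. -/
def rowSel (k : ι) (A : Matrix ι ι R) : Matrix ι ι R := fun i j => if i = k then A i j else 0

/-- `A^{•k}`: the matrix keeping only the `k`-th column of `A`. -/
def colSel (k : ι) (A : Matrix ι ι R) : Matrix ι ι R := fun i j => if j = k then A i j else 0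

/-- Entrywise maximum of two matrices. -/
def emax (A B : Matrix ι ι R) : Matrix ι ι R := fun i j => max (A i j) (B i j)

/-- `J_ℓ`: identity matrix with `(ℓ,ℓ)` entry replaced by `-1`. -/
def Jmat (ℓ : ι) : Matrix ι ι R := Matrix.diagonal fun i => if i = ℓ then -1 else 1

/-- Matrix mutation `μ_k(B)` in direction `k`. -/
def mutate (B : Matrix ι ι R) (k : ι) : Matrix ι ι R := fun i j =>
  if i = k ∨ j = k then -(B i j)
  else B i j + max (B i k) 0 * B k j + B i k * max (-(B k j)) 0

/-- The data `(B_t, C_t, G_t, F_t)` attached to a vertex. -/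
structure SeedData (ι R : Type) where
  B : Matrix ι ι R
  C : Matrix ι ι R
  G : Matrix ι ι R
  F : Matrix ι ι R

/-- One final-seed mutation step in direction `ℓ` (with initial exchange matrix `B0`). -/
def seedStep (B0 : Matrix ι ι R) (s : SeedData ι R) (ℓ : ι) : SeedData ι R where
  B := mutate s.B ℓ
  C := s.C * (Jmat ℓ + rowSel ℓ (matPos s.B)) + colSel ℓ (matPos (-s.C)) * s.B
  G := s.G * (Jmat ℓ + colSel ℓ (matPos s.B)) - B0 * colSel ℓ (matPos s.C)
  F := s.F * Jmat ℓ + emax (colSel ℓ (matPos s.C) + s.F * colSel ℓ (matPos s.B))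
      (colSel ℓ (matPos (-s.C)) + s.F * colSel ℓ (matPos (-s.B)))

/-- The seed data at the endpoint of the path `p` starting from the initial vertex. -/
def seedOf (B0 : Matrix ι ι R) (p : List ι) : SeedData ι R :=
  p.foldl (seedStep B0) ⟨B0, 1, 1, 0⟩

/-- The exchange matrix `B_t` at the end of the path `p`. -/
def Bpath (B : Matrix ι ι R) (p : List ι) : Matrix ι ι R := (seedOf B p).B

/-- The `C`-matrix `C^{B;t_0}_t` at the end of the path `p`. -/
def Cmat (B : Matrix ι ι R) (p : List ι) : Matrix ι ι R := (seedOf B p).C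

/-- The `G`-matrix `G^{B;t_0}_t` at the end of the path `p`. -/
def Gmat (B : Matrix ι ι R) (p : List ι) : Matrix ι ι R := (seedOf B p).G

/-- The `F`-matrix `F^{B;t_0}_t` at the end of the path `p`. -/
def Fmat (B : Matrix ι ι R) (p : List ι) : Matrix ι ι R := (seedOf B p).F

/-- `B` is skew-symmetrizable: `DB` is skew-symmetric for some positive diagonal `D`. -/
def IsSkewSymmetrizable (B : Matrix ι ι ℤ) : Prop :=
  ∃ d : ι → ℤ, (∀ i, 0 < d i) ∧ (Matrix.diagonal d * B)ᵀ = -(Matrix.diagonal d * B)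

/-- Column sign-coherence: every column is nonzero and has all entries of one sign. -/
def ColSignCoherent (A : Matrix ι ι ℤ) : Prop :=
  ∀ j, (∃ i, A i j ≠ 0) ∧ ((∀ i, 0 ≤ A i j) ∨ (∀ i, A i j ≤ 0))

/-- Row sign-coherence: every row is nonzero and has all entries of one sign. -/
def RowSignCoherent (A : Matrix ι ι ℤ) : Prop :=
  ∀ i, (∃ j, A i j ≠ 0) ∧ ((∀ j, 0 ≤ A i j) ∨ (∀ j, A i j ≤ 0))

/-- `ε` is the column sign `ε_{•ℓ}(A)` of the (sign-coherent, nonzero) `ℓ`-th column of `A`. -/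
def IsColSign (ε : ℤ) (A : Matrix ι ι ℤ) (ℓ : ι) : Prop :=
  (ε = 1 ∨ ε = -1) ∧ (∃ i, A i ℓ ≠ 0) ∧ ∀ i, 0 ≤ ε * A i ℓ

/-- `ε` is the row sign `ε_{k•}(A)` of the (sign-coherent, nonzero) `k`-th row of `A`. -/
def IsRowSign (ε : ℤ) (A : Matrix ι ι ℤ) (k : ι) : Prop :=
  (ε = 1 ∨ ε = -1) ∧ (∃ j, A k j ≠ 0) ∧ ∀ j, 0 ≤ ε * A k j

/-- Sign-coherence of `C`-matrices: for every skew-symmetrizable initial integer matrix and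
every path, the associated `C`-matrix is column sign-coherent. -/
def SignCoherenceOfC : Prop :=
  ∀ (κ : Type) [Fintype κ] [DecidableEq κ], ∀ B : Matrix κ κ ℤ,
    IsSkewSymmetrizable B → ∀ p : List κ, ColSignCoherent (Cmat B p)

/-- The principal extension `B̄ = [[B, -I],[I, O]]` of `B`, on the index type `Fin n ⊕ Fin n`. -/
def pext {n : ℕ} (B : Matrix (Fin n) (Fin n) ℤ) :
    Matrix (Fin n ⊕ Fin n) (Fin n ⊕ Fin n) ℤ :=
  Matrix.fromBlocks B (-1) 1 0

noncomputable section FPolys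

/-- The ambient field of rational functions `ℚ(y_i : i ∈ ι)` (fraction field of `ℤ[y_i]`). -/
abbrev FField (ι : Type) := FractionRing (MvPolynomial ι ℤ)

/-- The variable `y_i` inside the fraction field. -/
def yvar (i : ι) : FField ι := algebraMap (MvPolynomial ι ℤ) (FField ι) (MvPolynomial.X i)

/-- One mutation step for the triple `(B_t, C_t, (F_{j;t})_j)`. -/
def fpolyStep (s : Matrix ι ι ℤ × Matrix ι ι ℤ × (ι → FField ι)) (ℓ : ι) :
    Matrix ι ι ℤ × Matrix ι ι ℤ × (ι → FField ι) :=
  ⟨mutate s.1 ℓ,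
   s.2.1 * (Jmat ℓ + rowSel ℓ (matPos s.1)) + colSel ℓ (matPos (-s.2.1)) * s.1,
   fun j => if j = ℓ then
     (s.2.2 ℓ)⁻¹ *
       ((∏ i, yvar i ^ (max (s.2.1 i ℓ) 0).toNat) * (∏ i, s.2.2 i ^ (max (s.1 i ℓ) 0).toNat)
        + (∏ i, yvar i ^ (max (-(s.2.1 i ℓ)) 0).toNat) *
            (∏ i, s.2.2 i ^ (max (-(s.1 i ℓ)) 0).toNat))
   else s.2.2 j⟩

/-- The `F`-polynomial `F^{B;t_0}_{j;t}` (as an element of the field of rational functions)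
at the end of the path `p`. -/
def Fpoly (B : Matrix ι ι ℤ) (p : List ι) : ι → FField ι :=
  (p.foldl fpolyStep ⟨B, 1, fun _ => 1⟩).2.2

/-- The polynomial representing an element of the fraction field (when it is a polynomial). -/
def polyOf (x : FField ι) : MvPolynomial ι ℤ := by
  classical exact
    if h : ∃ q : MvPolynomial ι ℤ, algebraMap (MvPolynomial ι ℤ) (FField ι) q = x then
      h.choose else 0

/-- The `H`-matrix `H^{B;t_0}_t`: `h_{ij;t}` is the minimum over exponent vectors `a` in the
support of `F^{B;t_0}_{j;t}` of `-a_i + ∑_{l ≠ i} [-b_{il}]₊ a_l`. -/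
def Hmat (B : Matrix ι ι ℤ) (p : List ι) : Matrix ι ι ℤ := fun i j =>
  if h : (polyOf (Fpoly B p j)).support.Nonempty then
    (polyOf (Fpoly B p j)).support.inf' h
      (fun a => -(a i : ℤ) + ∑ l ∈ Finset.univ.erase i, max (-(B i l)) 0 * (a l : ℤ))
  else 0

end FPolys

/-- The embedding `ℚ(y_1,…,y_n) → ℚ(y_1,…,y_{2n})` sending `y_i` to `y_i`
(the second batch of variables indexed by the right summand). -/
noncomputable def embK (n : ℕ) : FField (Fin n) →+* FField (Fin n ⊕ Fin n) :=
  IsFractionRing.lift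
    (g := (algebraMap (MvPolynomial (Fin n ⊕ Fin n) ℤ) (FField (Fin n ⊕ Fin n))).comp
      (MvPolynomial.rename (Sum.inl : Fin n → Fin n ⊕ Fin n)).toRingHom)
    (by
      intro a b hab
      simp only [RingHom.coe_comp, Function.comp_apply, AlgHom.toRingHom_eq_coe,
        RingHom.coe_coe] at hab
      exact MvPolynomial.rename_injective _ Sum.inl_injective
        (IsFractionRing.injective (MvPolynomial (Fin n ⊕ Fin n) ℤ)
          (FField (Fin n ⊕ Fin n)) hab))

/-- `D⁻¹ Cᵀ D` over `ℚ`, for the positive diagonal skew-symmetrizer `D = diagonal d`. -/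
noncomputable def dCd {n : ℕ} (d : Fin n → ℤ) (C : Matrix (Fin n) (Fin n) ℤ) :
    Matrix (Fin n) (Fin n) ℚ :=
  (Matrix.diagonal fun i => (d i : ℚ))⁻¹ * (C.map (Int.cast : ℤ → ℚ))ᵀ *
    Matrix.diagonal fun i => (d i : ℚ)

end Defs

section AuxProof

variable {ι : Type} [Fintype ι] [DecidableEq ι]

private lemma sum_shift (f g : ι → ℤ) (ℓ : ι) (h : ∀ k, k ≠ ℓ → f k = g k) :
    ∑ k, f k = (∑ k, g k) + (f ℓ - g ℓ) := by
  have h1 := Finset.add_sum_erase Finset.univ f (Finset.mem_univ ℓ)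
  have h2 := Finset.add_sum_erase Finset.univ g (Finset.mem_univ ℓ)
  have h3 : ∑ k ∈ Finset.univ.erase ℓ, f k = ∑ k ∈ Finset.univ.erase ℓ, g k :=
    Finset.sum_congr rfl fun k hk => h k (Finset.ne_of_mem_erase hk)
  linarith

private lemma pos_mul_max {t : ℤ} (x : ℤ) (ht : 0 < t) : t * max x 0 = max (t * x) 0 := by
  rcases le_total x 0 with h | h
  · rw [max_eq_right h, max_eq_right (mul_nonpos_of_nonneg_of_nonpos ht.le h), mul_zero]
  · rw [max_eq_left h, max_eq_left (mul_nonneg ht.le h)]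

private lemma matPos_apply (A : Matrix ι ι ℤ) (i j : ι) : matPos A i j = max (A i j) 0 := rfl

private lemma mul_Jmat_apply (A : Matrix ι ι ℤ) (ℓ i j : ι) :
    (A * (Jmat ℓ : Matrix ι ι ℤ)) i j = if j = ℓ then -(A i j) else A i j := by
  simp only [Jmat, Matrix.mul_diagonal]; split_ifs <;> ring

private lemma mul_rowSel_apply (A M : Matrix ι ι ℤ) (ℓ i j : ι) :
    (A * rowSel ℓ M) i j = A i ℓ * M ℓ j := by
  rw [Matrix.mul_apply, Finset.sum_eq_single ℓ]
  · simp [rowSel]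
  · intro b _ hb; simp [rowSel, hb]
  · intro hb; exact absurd (Finset.mem_univ ℓ) hb

private lemma colSel_mul_apply (N A : Matrix ι ι ℤ) (ℓ i j : ι) :
    (colSel ℓ N * A) i j = N i ℓ * A ℓ j := by
  rw [Matrix.mul_apply, Finset.sum_eq_single ℓ]
  · simp [colSel]
  · intro b _ hb; simp [colSel, hb]
  · intro hb; exact absurd (Finset.mem_univ ℓ) hb

private lemma mul_colSel_apply (A M : Matrix ι ι ℤ) (ℓ i j : ι) :
    (A * colSel ℓ M) i j = if j = ℓ then ∑ k, A i k * M k ℓ else 0 := by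
  rw [Matrix.mul_apply]
  split_ifs with h
  · subst h; exact Finset.sum_congr rfl fun k _ => by simp [colSel]
  · exact Finset.sum_eq_zero fun k _ => by simp [colSel, h]

private lemma emax_apply (A B : Matrix ι ι ℤ) (i j : ι) : emax A B i j = max (A i j) (B i j) := rfl

private lemma seedOf_snoc (B : Matrix ι ι ℤ) (p : List ι) (ℓ : ι) :
    seedOf B (p ++ [ℓ]) = seedStep B (seedOf B p) ℓ := by
  simp [seedOf, List.foldl_append]

private lemma Bpath_snoc (B : Matrix ι ι ℤ) (p : List ι) (ℓ : ι) :
    Bpath B (p ++ [ℓ]) = mutate (Bpath B p) ℓ := by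
  simp [Bpath, seedOf_snoc, seedStep]

private lemma Cmat_snoc (B : Matrix ι ι ℤ) (p : List ι) (ℓ : ι) :
    Cmat B (p ++ [ℓ]) = Cmat B p * (Jmat ℓ + rowSel ℓ (matPos (Bpath B p)))
      + colSel ℓ (matPos (-(Cmat B p))) * Bpath B p := by
  simp [Cmat, Bpath, seedOf_snoc, seedStep]

private lemma Fmat_snoc (B : Matrix ι ι ℤ) (p : List ι) (ℓ : ι) :
    Fmat B (p ++ [ℓ]) = Fmat B p * Jmat ℓ
      + emax (colSel ℓ (matPos (Cmat B p)) + Fmat B p * colSel ℓ (matPos (Bpath B p)))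
          (colSel ℓ (matPos (-(Cmat B p))) + Fmat B p * colSel ℓ (matPos (-(Bpath B p)))) := by
  simp [Fmat, Cmat, Bpath, seedOf_snoc, seedStep]

end AuxProof

section AuxProof2

variable {ι : Type} [Fintype ι] [DecidableEq ι]

private lemma mutate_neg (B : Matrix ι ι ℤ) (k : ι) :
    mutate (-B) k = -(mutate B k) := by
  funext i j
  by_cases h : i = k ∨ j = k
  · simp [mutate, h]
  · have h1 : max (B i k) 0 - max (-(B i k)) 0 = B i k := by omega
    have h2 : max (B k j) 0 - max (-(B k j)) 0 = B k j := by omega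
    simp only [mutate, if_neg h, Matrix.neg_apply, neg_neg]
    linear_combination (B k j) * h1 + (-(B i k)) * h2

private lemma skew_mutate (A : Matrix ι ι ℤ) (d : ι → ℤ) (hd : ∀ i, 0 < d i)
    (h : ∀ i j, d i * A i j = -(d j * A j i)) (k : ι) :
    ∀ i j, d i * mutate A k i j = -(d j * mutate A k j i) := by
  intro i j
  by_cases hk : i = k ∨ j = k
  · have hk' : j = k ∨ i = k := hk.symm
    simp only [mutate, if_pos hk, if_pos hk', mul_neg, h i j, neg_neg]
  · have hk' : ¬(j = k ∨ i = k) := fun hc => hk hc.symm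
    simp only [mutate, if_neg hk, if_neg hk']
    refine mul_left_cancel₀ (hd k).ne' ?_
    have h1 : d i * max (A i k) 0 = max (-(d k * A k i)) 0 := by
      rw [pos_mul_max _ (hd i), h i k]
    have h3 : d k * max (-(A k j)) 0 = max (d j * A j k) 0 := by
      rw [pos_mul_max _ (hd k), mul_neg, h k j, neg_neg]
    have h4 : d j * max (A j k) 0 = max (d j * A j k) 0 := pos_mul_max _ (hd j)
    have h5 : d k * max (-(A k i)) 0 = max (-(d k * A k i)) 0 := by
      rw [pos_mul_max _ (hd k), mul_neg]
    linear_combination (d k) * h i j + (d k * A k j) * h1 + (d i * A i k) * h3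
      + (d k * A k i) * h4 + (d j * A j k) * h5
      + (max (-(d k * A k i)) 0) * h k j + (max (d j * A j k) 0) * h i k

end AuxProof2

section AuxProof3

variable {ι : Type} [Fintype ι] [DecidableEq ι]

private lemma Cstep (Bt C F : Matrix ι ι ℤ) (ℓ : ι) (hdiag : Bt ℓ ℓ = 0) :
    (C + F * Bt) * (Jmat ℓ + rowSel ℓ (matPos (-Bt))) + colSel ℓ (matPos (-(C + F * Bt))) * (-Bt)
      = (C * (Jmat ℓ + rowSel ℓ (matPos Bt)) + colSel ℓ (matPos (-C)) * Bt)
        + (F * Jmat ℓ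
            + emax (colSel ℓ (matPos C) + F * colSel ℓ (matPos Bt))
                (colSel ℓ (matPos (-C)) + F * colSel ℓ (matPos (-Bt)))) * mutate Bt ℓ := by
  ext i j
  have hmax : ∀ x : ℤ, max x 0 - max (-x) 0 = x := fun x => by omega
  set G := F * Jmat ℓ
      + emax (colSel ℓ (matPos C) + F * colSel ℓ (matPos Bt))
          (colSel ℓ (matPos (-C)) + F * colSel ℓ (matPos (-Bt))) with hG
  have hGk : ∀ k, G i k = if k = ℓ
      then -(F i ℓ) + max (max (C i ℓ) 0 + ∑ m, F i m * max (Bt m ℓ) 0)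
                          (max (-(C i ℓ)) 0 + ∑ m, F i m * max (-(Bt m ℓ)) 0)
      else F i k := by
    intro k
    simp only [hG, Matrix.add_apply, mul_Jmat_apply, emax_apply, mul_colSel_apply,
      colSel, matPos_apply, Matrix.neg_apply]
    by_cases hk : k = ℓ
    · simp [hk]
    · simp [hk]
  have hGmut : (G * mutate Bt ℓ) i j = ∑ k, G i k * mutate Bt ℓ k j := Matrix.mul_apply
  have hS : (∑ k, F i k * Bt k ℓ)
      = (∑ k, F i k * max (Bt k ℓ) 0) - ∑ k, F i k * max (-(Bt k ℓ)) 0 := by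
    rw [← Finset.sum_sub_distrib]
    exact Finset.sum_congr rfl fun k _ => by linear_combination (-(F i k)) * hmax (Bt k ℓ)
  simp only [Matrix.mul_add, Matrix.add_apply]
  simp only [mul_Jmat_apply, mul_rowSel_apply, colSel_mul_apply]
  rw [hGmut]
  by_cases hj : j = ℓ
  · have hmutk : ∀ k, mutate Bt ℓ k j = -(Bt k j) := by
      intro k; simp [mutate, hj]
    have hsum : (∑ k, G i k * mutate Bt ℓ k j)
        = (∑ k, F i k * (-(Bt k j)))
          + (G i ℓ * mutate Bt ℓ ℓ j - F i ℓ * (-(Bt ℓ j))) := by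
      exact sum_shift _ _ ℓ fun k hk => by rw [hGk k, if_neg hk, hmutk k]
    rw [hsum, hmutk ℓ, hj]
    simp only [if_pos rfl, matPos_apply, Matrix.neg_apply, Matrix.add_apply, Matrix.mul_apply,
      mul_neg, Finset.sum_neg_distrib]
    rw [hdiag]
    simp only [neg_zero, max_self, mul_zero, zero_mul, add_zero, sub_zero, if_true]
    ring
  · have hmutk : ∀ k, k ≠ ℓ → mutate Bt ℓ k j
        = Bt k j + max (Bt k ℓ) 0 * Bt ℓ j + Bt k ℓ * max (-(Bt ℓ j)) 0 := by
      intro k hk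
      have : ¬(k = ℓ ∨ j = ℓ) := by tauto
      simp [mutate, this]
    have hsum : (∑ k, G i k * mutate Bt ℓ k j)
        = (∑ k, F i k * (Bt k j + max (Bt k ℓ) 0 * Bt ℓ j + Bt k ℓ * max (-(Bt ℓ j)) 0))
          + (G i ℓ * mutate Bt ℓ ℓ j
            - F i ℓ * (Bt ℓ j + max (Bt ℓ ℓ) 0 * Bt ℓ j + Bt ℓ ℓ * max (-(Bt ℓ j)) 0)) := by
      exact sum_shift _ _ ℓ fun k hk => by rw [hGk k, if_neg hk, hmutk k hk]
    have hml : mutate Bt ℓ ℓ j = -(Bt ℓ j) := by simp [mutate]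
    have hsplit : (∑ k, F i k * (Bt k j + max (Bt k ℓ) 0 * Bt ℓ j + Bt k ℓ * max (-(Bt ℓ j)) 0))
        = (∑ k, F i k * Bt k j) + (∑ k, F i k * max (Bt k ℓ) 0) * Bt ℓ j
          + (∑ k, F i k * Bt k ℓ) * max (-(Bt ℓ j)) 0 := by
      rw [Finset.sum_mul, Finset.sum_mul, ← Finset.sum_add_distrib, ← Finset.sum_add_distrib]
      exact Finset.sum_congr rfl fun k _ => by ring
    rw [hsum, hml, hGk ℓ, if_pos rfl, hsplit, hdiag]
    simp only [matPos_apply, Matrix.neg_apply, Matrix.add_apply, Matrix.mul_apply, if_neg hj,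
      max_self, mul_zero, zero_mul, add_zero]
    rw [hS]
    set c := C i ℓ
    set β := Bt ℓ j
    set sp := ∑ k, F i k * max (Bt k ℓ) 0 with hsp
    set sm := ∑ k, F i k * max (-(Bt k ℓ)) 0 with hsm
    have h1 : max β 0 - max (-β) 0 = β := hmax β
    have hK : max (-c) 0 + sp - max (max c 0 + sp) (max (-c) 0 + sm)
        + max (-(c + (sp - sm))) 0 + c = 0 := by omega
    linear_combination (-c) * h1 + (-β) * hK

end AuxProof3

section AuxProof4

variable {ι : Type} [Fintype ι] [DecidableEq ι]

private lemma key_identity (B : Matrix ι ι ℤ) (d : ι → ℤ) (hd : ∀ i, 0 < d i)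
    (hskew : ∀ i j, d i * B i j = -(d j * B j i)) (p : List ι) :
    (∀ i j, d i * Bpath B p i j = -(d j * Bpath B p j i)) ∧
    Bpath (-B) p = -(Bpath B p) ∧
    Cmat (-B) p = Cmat B p + Fmat B p * Bpath B p := by
  induction p using List.reverseRecOn with
  | nil =>
      refine ⟨hskew, rfl, ?_⟩
      show (1 : Matrix ι ι ℤ) = 1 + 0 * B
      rw [Matrix.zero_mul, add_zero]
  | append_singleton p ℓ ih =>
      obtain ⟨hsk, hBneg, hC⟩ := ih
      have hdiag : Bpath B p ℓ ℓ = 0 := by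
        have h := hsk ℓ ℓ
        have h0 : d ℓ * Bpath B p ℓ ℓ = 0 := by linarith
        exact (mul_eq_zero.mp h0).resolve_left (hd ℓ).ne'
      refine ⟨?_, ?_, ?_⟩
      · rw [Bpath_snoc]; exact skew_mutate _ d hd hsk ℓ
      · rw [Bpath_snoc, Bpath_snoc, hBneg, mutate_neg]
      · rw [Cmat_snoc, Cmat_snoc, Fmat_snoc, Bpath_snoc, hBneg, hC]
        exact Cstep (Bpath B p) (Cmat B p) (Fmat B p) ℓ hdiag

end AuxProof4

/-- reduced final-seed mutation of the `F`-matrix, using the tropical signs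
`ε₁ = ε_{•ℓ}(C^{B;t_0}_t)` and `ε₂ = ε_{•ℓ}(C^{-B;t_0}_t)`. -/
theorem Fmat_finalSeedMutation_reduced {n : ℕ} (B : Matrix (Fin n) (Fin n) ℤ)
    (hB : IsSkewSymmetrizable B) (p : List (Fin n)) (ℓ : Fin n) (ε₁ ε₂ : ℤ)
    (h₁ : IsColSign ε₁ (Cmat B p) ℓ) (h₂ : IsColSign ε₂ (Cmat (-B) p) ℓ) :
    Fmat B (p ++ [ℓ]) =
        Fmat B p * (Jmat ℓ + colSel ℓ (matPos (ε₂ • Bpath B p)))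
          + colSel ℓ (matPos (ε₂ • Cmat B p)) ∧
      Fmat B (p ++ [ℓ]) =
        Fmat B p * (Jmat ℓ + colSel ℓ (matPos ((-ε₁) • Bpath B p)))
          + colSel ℓ (matPos (ε₁ • Cmat (-B) p)) := by
  obtain ⟨d, hd, hsk0⟩ := hB
  have hskew : ∀ i j, d i * B i j = -(d j * B j i) := by
    intro i j
    have h := congrFun (congrFun hsk0 j) i
    simp only [Matrix.transpose_apply, Matrix.diagonal_mul, Matrix.neg_apply] at h
    linarith
  obtain ⟨-, -, hC⟩ := key_identity B d hd hskew p
  obtain ⟨hε₂, -, h₂s⟩ := h₂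
  obtain ⟨hε₁, -, h₁s⟩ := h₁
  have hcol : ∀ i, Cmat (-B) p i ℓ
      = Cmat B p i ℓ + ∑ k, Fmat B p i k * Bpath B p k ℓ := by
    intro i
    rw [hC]
    simp [Matrix.add_apply, Matrix.mul_apply]
  have hmax : ∀ x : ℤ, max x 0 - max (-x) 0 = x := fun x => by omega
  have hS : ∀ i, (∑ k, Fmat B p i k * Bpath B p k ℓ)
      = (∑ k, Fmat B p i k * max (Bpath B p k ℓ) 0)
        - ∑ k, Fmat B p i k * max (-(Bpath B p k ℓ)) 0 := by
    intro i
    rw [← Finset.sum_sub_distrib]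
    exact Finset.sum_congr rfl fun k _ =>
      by linear_combination (-(Fmat B p i k)) * hmax (Bpath B p k ℓ)
  constructor
  · ext i j
    rw [Fmat_snoc]
    simp only [Matrix.mul_add, Matrix.add_apply, mul_Jmat_apply, mul_colSel_apply, emax_apply,
      colSel, matPos_apply, Matrix.neg_apply, Matrix.smul_apply, smul_eq_mul]
    by_cases hj : j = ℓ
    · subst hj
      simp only [eq_self_iff_true, if_true]
      have e2C := h₂s i
      rw [hcol i, hS i] at e2C
      rcases hε₂ with rfl | rfl
      · simp only [one_mul] at e2C ⊢
        omega
      · simp only [neg_one_mul] at e2C ⊢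
        omega
    · simp [if_neg hj]
  · ext i j
    rw [Fmat_snoc]
    simp only [Matrix.mul_add, Matrix.add_apply, mul_Jmat_apply, mul_colSel_apply, emax_apply,
      colSel, matPos_apply, Matrix.neg_apply, Matrix.smul_apply, smul_eq_mul]
    by_cases hj : j = ℓ
    · subst hj
      simp only [eq_self_iff_true, if_true]
      have e1C := h₁s i
      rw [hcol i, hS i]
      rcases hε₁ with rfl | rfl
      · simp only [one_mul, neg_one_mul] at e1C ⊢
        omega
      · simp only [neg_one_mul, neg_neg, one_mul] at e1C ⊢
        omega
    · simp [if_neg hj]
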